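/- Let ε, R > 0 with R ≥ 9ε, let x₀ ∈ ℝ³, and let v : ℝ³ → ℝ be continuous on the closed ball B̄(x₀,R), twice continuously differentiable on the open ball B(x₀,R), satisfy 0 ≤ v ≤ 1 on B̄(x₀,R), and solve 4ε²Δv(x) = v(x) for every x ∈ B(x₀,R). Then v(x₀) ≤ exp(−R/(8ε)). -/

import Mathlib

open Metric

noncomputable section

abbrev E3 : Type := EuclideanSpace ℝ (Fin 3)

/-- The Laplacian on `ℝ³`: the sum of the second partial derivatives. -/
def lap (w : E3 → ℝ) (x : E3) : ℝ :=
  ∑ i : Fin 3,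
    fderiv ℝ (fun y => fderiv ℝ w y (EuclideanSpace.single i 1)) x (EuclideanSpace.single i 1)

namespace Stmt13Aux

open Filter

lemma second_deriv_test {g : ℝ → ℝ} {a : ℝ}
    (hd : ∀ᶠ t in nhds (0:ℝ), DifferentiableAt ℝ g t)
    (h2 : HasDerivAt (deriv g) a 0) (hmax : IsLocalMax g 0) : a ≤ 0 := by
  by_contra hcon
  push_neg at hcon
  have hg'0 : deriv g 0 = 0 := hmax.deriv_eq_zero
  have hslope := hasDerivAt_iff_tendsto_slope.mp h2
  have hpos : ∀ᶠ t in nhdsWithin (0:ℝ) (Set.Ioi 0), 0 < deriv g t := by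
    have h1 : ∀ᶠ t in nhdsWithin (0:ℝ) {(0:ℝ)}ᶜ, 0 < slope (deriv g) 0 t :=
      hslope.eventually (eventually_gt_nhds hcon)
    have h2' : ∀ᶠ t in nhdsWithin (0:ℝ) (Set.Ioi 0), 0 < slope (deriv g) 0 t :=
      h1.filter_mono (nhdsWithin_mono _ (fun t ht => ne_of_gt ht))
    filter_upwards [h2', self_mem_nhdsWithin] with t ht ht0
    have hs : slope (deriv g) 0 t = deriv g t / t := by simp [slope_def_field, hg'0]
    rw [hs] at ht
    rcases div_pos_iff.mp ht with ⟨h, _⟩ | ⟨_, h⟩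
    · exact h
    · exact absurd ht0 (by simp; linarith)
  obtain ⟨δ₁, hδ₁, hball⟩ := Metric.eventually_nhds_iff.mp (hd.and hmax)
  obtain ⟨v, hv, hIoo⟩ := mem_nhdsGT_iff_exists_Ioo_subset.mp hpos
  set δ := min (δ₁/2) (v/2) with hδdef
  have hv0 : 0 < v := hv
  have hδ : 0 < δ := by positivity
  have hmem : ∀ t ∈ Set.Icc (0:ℝ) δ, DifferentiableAt ℝ g t ∧ g t ≤ g 0 := by
    intro t ht
    apply hball
    rw [Real.dist_eq, sub_zero, abs_of_nonneg ht.1]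
    have h1 := ht.2
    have h2 : δ ≤ δ₁/2 := min_le_left _ _
    linarith
  have hcont : ContinuousOn g (Set.Icc 0 δ) :=
    fun t ht => ((hmem t ht).1).continuousAt.continuousWithinAt
  have hderiv : ∀ t ∈ interior (Set.Icc (0:ℝ) δ), 0 < deriv g t := by
    rw [interior_Icc]
    intro t ht
    apply hIoo
    refine ⟨ht.1, ?_⟩
    have : δ ≤ v/2 := min_le_right _ _
    linarith [ht.2]
  have hmono := strictMonoOn_of_deriv_pos (convex_Icc 0 δ) hcont hderiv
  have h01 : g 0 < g δ :=
    hmono (Set.left_mem_Icc.mpr hδ.le) (Set.right_mem_Icc.mpr hδ.le) hδ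
  have hle : g δ ≤ g 0 := (hmem δ (Set.right_mem_Icc.mpr hδ.le)).2
  linarith

def q (x₀ x : E3) : ℝ := ∑ i, (x i - x₀ i)^2

def Dq (x₀ x : E3) : E3 →L[ℝ] ℝ :=
  ∑ i, (2*(x i - x₀ i)) • (EuclideanSpace.proj (𝕜 := ℝ) i)

lemma hasFDerivAt_coord (x₀ x : E3) (i : Fin 3) :
    HasFDerivAt (fun z : E3 => z i - x₀ i) (EuclideanSpace.proj (𝕜 := ℝ) i) x :=
  (EuclideanSpace.proj (𝕜 := ℝ) i).hasFDerivAt.sub_const (x₀ i)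

lemma hasFDerivAt_q (x₀ x : E3) : HasFDerivAt (q x₀) (Dq x₀ x) x := by
  have h : ∀ i : Fin 3, HasFDerivAt (fun z : E3 => (z i - x₀ i)^2)
      ((2*(x i - x₀ i)) • (EuclideanSpace.proj (𝕜 := ℝ) i)) x := by
    intro i
    have := (hasFDerivAt_coord x₀ x i).fun_mul (hasFDerivAt_coord x₀ x i)
    have h2 : (fun z : E3 => (z i - x₀ i) * (z i - x₀ i)) = fun z : E3 => (z i - x₀ i)^2 := by
      funext z; ring
    rw [h2] at this
    refine this.congr_fderiv ?_
    ext z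
    simp
    ring
  exact HasFDerivAt.fun_sum (fun i _ => h i)

def w (c b : ℝ) (x₀ : E3) (x : E3) : ℝ := Real.exp (c * (q x₀ x - b))

lemma hasFDerivAt_w (c b : ℝ) (x₀ x : E3) :
    HasFDerivAt (w c b x₀) (w c b x₀ x • (c • Dq x₀ x)) x :=
  (((hasFDerivAt_q x₀ x).sub_const b).const_mul c).exp

lemma Dq_apply (x₀ x : E3) (i : Fin 3) :
    Dq x₀ x (EuclideanSpace.single i 1) = 2*(x i - x₀ i) := by
  simp [Dq, EuclideanSpace.single_apply]

lemma fderiv_w_apply (c b : ℝ) (x₀ : E3) (i : Fin 3) :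
    (fun z => fderiv ℝ (w c b x₀) z (EuclideanSpace.single i 1))
      = fun z => w c b x₀ z * (c * (2 * (z i - x₀ i))) := by
  funext z
  rw [(hasFDerivAt_w c b x₀ z).fderiv]
  simp [Dq_apply]
  try ring

def Bw (c b : ℝ) (x₀ x : E3) (i : Fin 3) : E3 →L[ℝ] ℝ :=
  (w c b x₀ x) • ((c*2) • (EuclideanSpace.proj (𝕜 := ℝ) i))
    + (c * (2 * (x i - x₀ i))) • (w c b x₀ x • (c • Dq x₀ x))

lemma hasFDerivAt_p (c b : ℝ) (x₀ x : E3) (i : Fin 3) :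
    HasFDerivAt (fun z => w c b x₀ z * (c * (2 * (z i - x₀ i)))) (Bw c b x₀ x i) x := by
  have h2 : HasFDerivAt (fun z : E3 => c * (2 * (z i - x₀ i)))
      ((c*2) • (EuclideanSpace.proj (𝕜 := ℝ) i)) x := by
    have := ((hasFDerivAt_coord x₀ x i).const_mul (2:ℝ)).const_mul c
    refine this.congr_fderiv ?_
    ext z; simp; ring
  exact (hasFDerivAt_w c b x₀ x).mul h2

lemma Bw_apply (c b : ℝ) (x₀ x : E3) (i : Fin 3) :
    Bw c b x₀ x i (EuclideanSpace.single i 1)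
      = w c b x₀ x * ((c * (2 * (x i - x₀ i)))^2 + 2*c) := by
  simp [Bw, Dq_apply, EuclideanSpace.single_apply]
  ring

lemma lap_w (c b : ℝ) (x₀ x : E3) :
    lap (w c b x₀) x = w c b x₀ x * (4*c^2 * q x₀ x + 6*c) := by
  unfold lap
  have h : ∀ i : Fin 3,
      fderiv ℝ (fun y => fderiv ℝ (w c b x₀) y (EuclideanSpace.single i 1)) x
          (EuclideanSpace.single i 1)
        = w c b x₀ x * ((c * (2 * (x i - x₀ i)))^2 + 2*c) := by
    intro i
    rw [fderiv_w_apply, (hasFDerivAt_p c b x₀ x i).fderiv, Bw_apply]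
  simp only [h]
  rw [← Finset.mul_sum]
  congr 1
  rw [Finset.sum_add_distrib, q, Finset.mul_sum]
  have h3 : ∑ _i : Fin 3, 2*c = 6*c := by
    simp; ring
  rw [h3]
  congr 1
  apply Finset.sum_congr rfl
  intro i _
  ring

end Stmt13Aux

set_option maxHeartbeats 2000000 in
theorem stmt13 (ε R : ℝ) (hε : 0 < ε) (hR : 9 * ε ≤ R) (x₀ : E3)
    (v : E3 → ℝ)
    (hcont : ContinuousOn v (Metric.closedBall x₀ R))
    (hC2 : ContDiffOn ℝ 2 v (Metric.ball x₀ R))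
    (hbd : ∀ x ∈ Metric.closedBall x₀ R, 0 ≤ v x ∧ v x ≤ 1)
    (heq : ∀ x ∈ Metric.ball x₀ R, 4 * ε ^ 2 * lap v x = v x) :
    v x₀ ≤ Real.exp (-(R / (8 * ε))) := by
  have hR0 : 0 < R := lt_of_lt_of_le (by linarith) hR
  set c : ℝ := 1/(8*ε*R) with hc
  have hc0 : 0 < c := by positivity
  set b : ℝ := R^2 with hb
  set W : E3 → ℝ := Stmt13Aux.w c b x₀ with hW
  set u : E3 → ℝ := fun x => v x - W x with hu
  have hWpos : ∀ x, 0 < W x := fun x => Real.exp_pos _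
  have hWdiff : ∀ z, DifferentiableAt ℝ W z :=
    fun z => (Stmt13Aux.hasFDerivAt_w c b x₀ z).differentiableAt
  have hWcont : Continuous W := by
    apply Real.continuous_exp.comp
    apply Continuous.mul continuous_const
    apply Continuous.sub _ continuous_const
    apply continuous_finset_sum
    intro i _
    exact ((EuclideanSpace.proj (𝕜 := ℝ) i).continuous.sub continuous_const).pow 2
  have hq : ∀ x : E3, Stmt13Aux.q x₀ x = (dist x x₀)^2 := by
    intro x
    rw [EuclideanSpace.dist_eq, Real.sq_sqrt (by positivity)]
    unfold Stmt13Aux.q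
    apply Finset.sum_congr rfl
    intro i _
    rw [Real.dist_eq, sq_abs]
  have hWcenter : W x₀ = Real.exp (-(R/(8*ε))) := by
    have hq0 : Stmt13Aux.q x₀ x₀ = 0 := by rw [hq]; simp
    rw [hW]
    unfold Stmt13Aux.w
    rw [hq0]
    congr 1
    rw [hc, hb]
    field_simp
    ring
  have hlapW : ∀ x ∈ Metric.ball x₀ R, 4*ε^2 * lap W x ≤ W x := by
    intro x hx
    rw [hW, Stmt13Aux.lap_w]
    have hqle : Stmt13Aux.q x₀ x ≤ R^2 := by
      rw [hq]
      have h1 : dist x x₀ < R := mem_ball.mp hx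
      nlinarith [dist_nonneg (x := x) (y := x₀)]
    have hqnn : 0 ≤ Stmt13Aux.q x₀ x := by rw [hq]; positivity
    have hcR : c * (8*ε*R) = 1 := by rw [hc]; field_simp
    have hkey : 4*ε^2 * (4*c^2 * Stmt13Aux.q x₀ x + 6*c) ≤ 1 := by
      have h1 : 16*ε^2*c^2*Stmt13Aux.q x₀ x ≤ 16*ε^2*c^2*R^2 := by nlinarith [sq_nonneg (ε*c)]
      have h2 : 16*ε^2*c^2*R^2 = 1/4 := by nlinarith [hcR]
      have h3 : 24*ε^2*c ≤ 1/3 := by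
        have : c * R = 1/(8*ε) := by rw [hc]; field_simp
        have h4 : 24*ε^2*c*R = 3*ε := by nlinarith [hcR]
        -- 24 ε² c = 3ε/R ≤ 1/3 since 9ε ≤ R
        have h5 : (24*ε^2*c) * (3*R) = 9*ε := by nlinarith
        nlinarith [mul_pos hε (mul_pos hε hc0), hR0]
      nlinarith
    have hWx : 0 < Stmt13Aux.w c b x₀ x := Real.exp_pos _
    calc 4*ε^2 * (Stmt13Aux.w c b x₀ x * (4*c^2 * Stmt13Aux.q x₀ x + 6*c))
        = Stmt13Aux.w c b x₀ x * (4*ε^2 * (4*c^2 * Stmt13Aux.q x₀ x + 6*c)) := by ring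
      _ ≤ Stmt13Aux.w c b x₀ x * 1 := by
          apply mul_le_mul_of_nonneg_left hkey hWx.le
      _ = Stmt13Aux.w c b x₀ x := mul_one _
  have hucont : ContinuousOn u (Metric.closedBall x₀ R) := hcont.sub hWcont.continuousOn
  have hx₀mem : x₀ ∈ Metric.closedBall x₀ R := mem_closedBall_self hR0.le
  obtain ⟨y, hy, hymax⟩ := (isCompact_closedBall x₀ R).exists_isMaxOn ⟨x₀, hx₀mem⟩ hucont
  have hyle : u y ≤ 0 := by
    have hdy : dist y x₀ ≤ R := mem_closedBall.mp hy
    rcases eq_or_lt_of_le hdy with heqR | hlt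
    · have hW1 : W y = 1 := by
        rw [hW]
        unfold Stmt13Aux.w
        rw [hq, heqR, hb]
        simp
      have hv1 := (hbd y hy).2
      have huy : u y = v y - W y := by rw [hu]
      rw [huy, hW1]
      linarith
    · by_contra hupos
      push_neg at hupos
      have hyball : y ∈ Metric.ball x₀ R := mem_ball.mpr hlt
      have hSnhds : Metric.ball x₀ R ∈ nhds y := isOpen_ball.mem_nhds hyball
      have hvdiff : ∀ z ∈ Metric.ball x₀ R, DifferentiableAt ℝ v z := fun z hz =>
        (hC2.contDiffAt (isOpen_ball.mem_nhds hz)).differentiableAt (by norm_num)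
      have hudiff : ∀ z ∈ Metric.ball x₀ R, DifferentiableAt ℝ u z := by
        intro z hz
        rw [hu]
        exact (hvdiff z hz).sub (hWdiff z)
      have hv2 : ContDiffAt ℝ 2 v y := hC2.contDiffAt hSnhds
      have hkey : ∀ i : Fin 3,
          fderiv ℝ (fun z => fderiv ℝ u z (EuclideanSpace.single i 1)) y
              (EuclideanSpace.single i 1)
            = fderiv ℝ (fun z => fderiv ℝ v z (EuclideanSpace.single i 1)) y
                (EuclideanSpace.single i 1)
              - Stmt13Aux.Bw c b x₀ y i (EuclideanSpace.single i 1)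
          ∧ fderiv ℝ (fun z => fderiv ℝ u z (EuclideanSpace.single i 1)) y
              (EuclideanSpace.single i 1) ≤ 0 := by
        intro i
        set e : E3 := EuclideanSpace.single i (1:ℝ) with he
        have hfv : DifferentiableAt ℝ (fun z => fderiv ℝ v z e) y := by
          have h1 : ContDiffAt ℝ 1 (fderiv ℝ v) y := hv2.fderiv_right (by norm_num)
          exact (h1.differentiableAt (by norm_num)).clm_apply (differentiableAt_const e)
        set Bv : E3 →L[ℝ] ℝ := fderiv ℝ (fun z => fderiv ℝ v z e) y with hBv
        set B : E3 →L[ℝ] ℝ := Bv - Stmt13Aux.Bw c b x₀ y i with hBdef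
        have hwB : HasFDerivAt (fun z => fderiv ℝ W z e) (Stmt13Aux.Bw c b x₀ y i) y := by
          rw [hW, he, Stmt13Aux.fderiv_w_apply]
          exact Stmt13Aux.hasFDerivAt_p c b x₀ y i
        have hB : HasFDerivAt (fun z => fderiv ℝ u z e) B y := by
          have hev : (fun z => fderiv ℝ u z e)
              =ᶠ[nhds y] fun z => fderiv ℝ v z e - fderiv ℝ W z e := by
            filter_upwards [hSnhds] with z hz
            rw [hu, fderiv_fun_sub (hvdiff z hz) (hWdiff z)]
            simp
          exact (hfv.hasFDerivAt.sub hwB).congr_of_eventuallyEq hev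
        have hfd_eq : fderiv ℝ (fun z => fderiv ℝ u z e) y = B := hB.fderiv
        constructor
        · rw [hfd_eq, hBdef]
          simp
        · set l : ℝ → E3 := fun t => y + t • e with hl
          have hld : ∀ t, HasDerivAt l e t := by
            intro t
            have := ((hasDerivAt_id t).smul_const e).const_add y
            simpa [hl] using this
          have hl0 : l 0 = y := by simp [hl]
          have hlc : Continuous l := by
            apply continuous_const.add
            exact continuous_id.smul continuous_const
          have hltend : Filter.Tendsto l (nhds 0) (nhds y) := by
            have := hlc.continuousAt (x := (0:ℝ))
            rwa [ContinuousAt, hl0] at this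
          have hevball : ∀ᶠ t in nhds (0:ℝ), l t ∈ Metric.ball x₀ R :=
            hltend.eventually ((eventually_mem_nhds_iff.mpr hSnhds).mono (fun _ h => mem_of_mem_nhds h))
          set g : ℝ → ℝ := fun t => u (l t) with hg
          have hgd : ∀ᶠ t in nhds (0:ℝ), HasDerivAt g (fderiv ℝ u (l t) e) t := by
            filter_upwards [hevball] with t ht
            exact (hudiff _ ht).hasFDerivAt.comp_hasDerivAt t (hld t)
          have hgdiff : ∀ᶠ t in nhds (0:ℝ), DifferentiableAt ℝ g t :=
            hgd.mono (fun t h => h.differentiableAt)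
          have hderivg : deriv g =ᶠ[nhds (0:ℝ)] fun t => fderiv ℝ u (l t) e :=
            hgd.mono (fun t h => h.deriv)
          have hcomp : HasDerivAt (fun t => fderiv ℝ u (l t) e) (B e) 0 := by
            have hB' : HasFDerivAt (fun z => fderiv ℝ u z e) B (l 0) := hl0 ▸ hB
            exact hB'.comp_hasDerivAt 0 (hld 0)
          have h2 : HasDerivAt (deriv g) (B e) 0 := hcomp.congr_of_eventuallyEq hderivg
          have hlm : IsLocalMax g 0 := by
            have h1 : IsLocalMax u y :=
              hymax.isLocalMax (Filter.mem_of_superset hSnhds ball_subset_closedBall)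
            have h3 := hltend.eventually h1
            have hgy : g 0 = u y := by
              rw [hg]
              show u (l 0) = u y
              rw [hl0]
            have h4 : ∀ᶠ t in nhds (0:ℝ), g t ≤ g 0 := by
              filter_upwards [h3] with t ht
              rw [hgy]
              exact ht
            exact h4
          have hBe := Stmt13Aux.second_deriv_test hgdiff h2 hlm
          rw [hfd_eq]
          exact hBe
      have hlapWy : lap W y = ∑ i : Fin 3, Stmt13Aux.Bw c b x₀ y i (EuclideanSpace.single i 1) := by
        unfold lap
        apply Finset.sum_congr rfl
        intro i _
        rw [hW, Stmt13Aux.fderiv_w_apply, (Stmt13Aux.hasFDerivAt_p c b x₀ y i).fderiv]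
      have hlapu : lap u y = lap v y - lap W y := by
        rw [hlapWy]
        unfold lap
        rw [← Finset.sum_sub_distrib]
        apply Finset.sum_congr rfl
        intro i _
        exact (hkey i).1
      have hlapu_le : lap u y ≤ 0 := by
        unfold lap
        exact Finset.sum_nonpos (fun i _ => (hkey i).2)
      have h1 : 4*ε^2 * lap u y = v y - 4*ε^2 * lap W y := by
        rw [hlapu, mul_sub]
        have := heq y hyball
        linarith
      have h2' := hlapW y hyball
      have h3 : u y ≤ 4*ε^2 * lap u y := by
        rw [h1, hu]
        simp only []
        linarith
      have h4 : 4*ε^2 * lap u y ≤ 0 := by nlinarith [sq_nonneg ε]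
      have h5 : u y ≤ 0 := le_trans h3 h4
      linarith
  have hx₀le : u x₀ ≤ u y := hymax hx₀mem
  have : v x₀ - W x₀ ≤ 0 := by
    have : u x₀ ≤ 0 := le_trans hx₀le hyle
    rwa [hu] at this
  linarith [hWcenter ▸ this]
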